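/- arXiv:1601.05740 — 2 statements merged into one kernel-verified Lean document; each statement's English description precedes it below -/
import Mathlib

section
/- For complex numbers t, s with t ≠ s̄ and neither t nor s in πℤ, one has ∑_{k∈ℤ} (sin(t−πk)/(t−πk)) · conj(sin(s−πk)/(s−πk)) = sin(t−s̄)/(t−s̄). -/
open MeasureTheory Complex AddCircle

local instance : Fact ((0:ℝ) < 2) := ⟨by norm_num⟩

noncomputable def myF (v : ℂ) : AddCircle (2:ℝ) → ℂ :=
  AddCircle.liftIoc 2 (-1) (fun x : ℝ => Complex.exp (v * x * Complex.I))

lemma myF_eq (v : ℂ) (z : AddCircle (2:ℝ)) :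
    myF v z = Complex.exp (v * ((equivIoc 2 (-1) z : ℝ) : ℂ) * Complex.I) := rfl

lemma measurable_myF (v : ℂ) : Measurable (myF v) := by
  have : Measurable fun z : AddCircle (2:ℝ) => ((equivIoc 2 (-1) z : ℝ)) :=
    measurable_subtype_coe.comp (AddCircle.measurableEquivIoc 2 (-1)).measurable
  exact (Complex.measurable_exp.comp (by fun_prop))

lemma memlp_myF (v : ℂ) : MemLp (myF v) 2 (haarAddCircle) := by
  refine MemLp.of_bound ((measurable_myF v).aestronglyMeasurable) (Real.exp |v.im|) ?_
  refine Filter.Eventually.of_forall fun z => ?_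
  rw [myF_eq, Complex.norm_exp]
  apply Real.exp_le_exp.2
  have hx : (equivIoc 2 (-1) z : ℝ) ∈ Set.Ioc (-1 : ℝ) (-1 + 2) := (equivIoc 2 (-1) z).2
  have hx1 : |(equivIoc 2 (-1) z : ℝ)| ≤ 1 := by
    rw [abs_le]; constructor <;> [linarith [hx.1]; linarith [hx.2]]
  have : (v * ((equivIoc 2 (-1) z : ℝ) : ℂ) * Complex.I).re = -(v.im * (equivIoc 2 (-1) z : ℝ)) := by
    simp [Complex.mul_re, Complex.mul_im]
  rw [this]
  calc -(v.im * _) ≤ |v.im * (equivIoc 2 (-1) z : ℝ)| := neg_le_abs _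
    _ = |v.im| * |(equivIoc 2 (-1) z : ℝ)| := abs_mul _ _
    _ ≤ |v.im| * 1 := by gcongr
    _ = |v.im| := mul_one _

lemma coeff_myF (v : ℂ) (k : ℤ) (hv : v - Real.pi * k ≠ 0) :
    fourierCoeff (myF v) k = Complex.sin (v - Real.pi * k) / (v - Real.pi * k) := by
  have h2 : (1 : ℝ) - (-1) = 2 := by norm_num
  have key : fourierCoeff (myF v) k = fourierCoeffOn (by norm_num : (-1:ℝ) < -1 + 2) (fun x : ℝ => Complex.exp (v * x * Complex.I)) k := by
    rw [myF, fourierCoeff_liftIoc_eq]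
  rw [key, fourierCoeffOn_eq_integral]
  have hTeq : (-1 : ℝ) + 2 - (-1) = 2 := by norm_num
  simp only [fourier_coe_apply, smul_eq_mul]
  norm_num
  set w := v - Real.pi * k with hw
  have hi : ∀ x : ℝ, cexp (-(2 * Real.pi * Complex.I * k * x) / 2) * cexp (v * x * Complex.I)
      = cexp ((w * Complex.I) * x) := by
    intro x
    rw [← Complex.exp_add]
    congr 1
    rw [hw]; ring
  rw [intervalIntegral.integral_congr (fun x _ => hi x),
    integral_exp_mul_complex (by simp [Complex.ext_iff, Complex.I_ne_zero, hv] : w * Complex.I ≠ 0)]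
  have hsin : Complex.sin w = (cexp (-w * Complex.I) - cexp (w * Complex.I)) * Complex.I / 2 := rfl
  rw [hsin]
  field_simp
  ring_nf
  simp [Complex.I_sq]
  ring

noncomputable def myL (v : ℂ) : Lp ℂ 2 (@haarAddCircle 2 _) := (memlp_myF v).toLp _

lemma fourierCoeff_myL (v : ℂ) (k : ℤ) :
    fourierCoeff (⇑(myL v)) k = fourierCoeff (myF v) k := by
  unfold fourierCoeff
  apply integral_congr_ae
  filter_upwards [(memlp_myF v).coeFn_toLp] with z hz
  simp only [myL]
  rw [hz]

lemma conj_mul_myF (s t : ℂ) (z : AddCircle (2:ℝ)) :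
    (starRingEnd ℂ) (myF s z) * myF t z = myF (t - (starRingEnd ℂ) s) z := by
  simp only [myF_eq]
  rw [← Complex.exp_conj, ← Complex.exp_add]
  congr 1
  rw [map_mul, map_mul, Complex.conj_I, Complex.conj_ofReal]
  ring

lemma inner_myL (s t : ℂ) (h : t - (starRingEnd ℂ) s ≠ 0) :
    (inner ℂ (myL s) (myL t) : ℂ)
      = Complex.sin (t - (starRingEnd ℂ) s) / (t - (starRingEnd ℂ) s) := by
  rw [MeasureTheory.L2.inner_def]
  have hae : ∀ᵐ z ∂(@haarAddCircle 2 _),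
      (inner ℂ (myL s z) (myL t z) : ℂ) = myF (t - (starRingEnd ℂ) s) z := by
    filter_upwards [(memlp_myF s).coeFn_toLp, (memlp_myF t).coeFn_toLp] with z h1 h2
    simp only [myL]
    rw [RCLike.inner_apply', h1, h2, conj_mul_myF]
  rw [integral_congr_ae hae]
  have h0 : fourierCoeff (myF (t - (starRingEnd ℂ) s)) 0
      = ∫ z, myF (t - (starRingEnd ℂ) s) z ∂(@haarAddCircle 2 _) := by
    simp [fourierCoeff]
  rw [← h0, coeff_myF _ 0 (by simpa using h)]
  simp

open Real in
theorem stmt_6 (t s : ℂ) (hts : t ≠ starRingEnd ℂ s)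
    (ht : ∀ k : ℤ, t ≠ (π : ℂ) * k) (hs : ∀ k : ℤ, s ≠ (π : ℂ) * k) :
    ∑' k : ℤ, (Complex.sin (t - π * k) / (t - π * k)) *
        starRingEnd ℂ (Complex.sin (s - π * k) / (s - π * k)) =
      Complex.sin (t - starRingEnd ℂ s) / (t - starRingEnd ℂ s) := by
  have hb := HilbertBasis.tsum_inner_mul_inner (@fourierBasis 2 _) (myL s) (myL t)
  have hterm : ∀ k : ℤ,
      (inner ℂ (myL s) ((@fourierBasis 2 _) k) : ℂ) * inner ℂ ((@fourierBasis 2 _) k) (myL t)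
      = (Complex.sin (t - π * k) / (t - π * k)) *
          starRingEnd ℂ (Complex.sin (s - π * k) / (s - π * k)) := by
    intro k
    have hrt : (inner ℂ ((@fourierBasis 2 _) k) (myL t) : ℂ)
        = Complex.sin (t - π * k) / (t - π * k) := by
      rw [← HilbertBasis.repr_apply_apply, fourierBasis_repr, fourierCoeff_myL,
        coeff_myF _ k (sub_ne_zero.mpr (ht k))]
    have hrs : (inner ℂ ((@fourierBasis 2 _) k) (myL s) : ℂ)
        = Complex.sin (s - π * k) / (s - π * k) := by
      rw [← HilbertBasis.repr_apply_apply, fourierBasis_repr, fourierCoeff_myL,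
        coeff_myF _ k (sub_ne_zero.mpr (hs k))]
    rw [← inner_conj_symm, hrs, hrt, mul_comm]
  rw [← tsum_congr hterm, hb, inner_myL _ _ (sub_ne_zero.mpr hts)]
end

section
/- Let α be an irrational multiple of 2π (i.e., α/(2π) ∉ ℚ). Then for every continuous function g : [0, 2π] → ℝ with g(0) = g(2π), the averages (1/n)·∑_{k=1}^{n} g((kα) mod 2π) converge as n → ∞ to (1/(2π))·∫₀^{2π} g(y) dy. -/
open Real Filter MeasureTheory AddCircle Complex Topology

noncomputable section WeylAuxSection

namespace WeylAux

variable {T : ℝ} [hT : Fact (0 < T)]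

lemma integrable_cm (f : C(AddCircle T, ℂ)) :
    Integrable (fun x => f x) (haarAddCircle (T := T)) :=
  f.continuous.integrable_of_hasCompactSupport ((isClosed_tsupport _).isCompact)

lemma integral_fourier_eq_zero {m : ℤ} (hm : m ≠ 0) :
    ∫ x, fourier m x ∂(haarAddCircle (T := T)) = 0 := by
  have h1 : ∫ x, fourier m (x + ((T / 2 / (m:ℝ) : ℝ) : AddCircle T)) ∂(haarAddCircle (T := T)) =
      ∫ x, fourier m x ∂(haarAddCircle (T := T)) :=
    integral_add_right_eq_self _ _
  have h2 : ∀ x : AddCircle T, fourier m (x + ((T / 2 / (m:ℝ) : ℝ) : AddCircle T))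
      = -fourier m x := fun x => fourier_add_half_inv_index hm hT.out x
  simp only [h2, integral_neg] at h1
  linear_combination -h1/2


lemma fourier_hom (m : ℤ) (x y : AddCircle T) :
    fourier m (x + y) = fourier m x * fourier m y := by
  simp_rw [fourier_apply, zsmul_add, toCircle_add, Circle.coe_mul]

lemma fourier_nsmul (m : ℤ) (a : AddCircle T) (k : ℕ) :
    fourier m (k • a) = (fourier m a) ^ k := by
  induction k with
  | zero => simp [fourier_eval_zero]
  | succ k ih => rw [succ_nsmul, fourier_hom, ih, pow_succ]

lemma avg_fourier_zero (a : AddCircle T) :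
    Tendsto (fun n : ℕ => (n:ℂ)⁻¹ * ∑ k ∈ Finset.Icc 1 n, fourier (0:ℤ) (k • a)) atTop
      (𝓝 (∫ x, fourier (0:ℤ) x ∂(haarAddCircle (T := T)))) := by
  have h : ∫ x, fourier (0:ℤ) x ∂(haarAddCircle (T := T)) = 1 := by
    simp only [fourier_zero]
    simp
  rw [h]
  apply Tendsto.congr' (f₁ := fun _ : ℕ => (1:ℂ)) _ tendsto_const_nhds
  filter_upwards [eventually_ge_atTop 1] with n hn
  have hn0 : 0 < n := hn
  have hn' : (n:ℂ) ≠ 0 := by exact_mod_cast hn0.ne'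
  simp only [fourier_zero, Finset.sum_const, Nat.card_Icc, add_tsub_cancel_right,
    nsmul_eq_mul, mul_one]
  field_simp

lemma avg_fourier_ne (a : AddCircle T) {m : ℤ} (hm : m ≠ 0) (ha : fourier m a ≠ 1) :
    Tendsto (fun n : ℕ => (n:ℂ)⁻¹ * ∑ k ∈ Finset.Icc 1 n, fourier m (k • a)) atTop
      (𝓝 (∫ x, fourier m x ∂(haarAddCircle (T := T)))) := by
  rw [integral_fourier_eq_zero hm]
  set z : ℂ := fourier m a with hz
  have hnorm : ‖z‖ = 1 := Circle.norm_coe _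
  have hbound : ∀ n : ℕ, ‖∑ k ∈ Finset.Icc 1 n, fourier m (k • a)‖ ≤ 2 / ‖z - 1‖ := by
    intro n
    have : ∑ k ∈ Finset.Icc 1 n, fourier m (k • a) = z * ((z ^ n - 1) / (z - 1)) := by
      simp_rw [fourier_nsmul]
      rw [← Finset.Ico_add_one_right_eq_Icc, Finset.sum_Ico_eq_sum_range]
      simp only [Nat.succ_sub_one, Nat.add_sub_cancel]
      rw [← geom_sum_eq ha, Finset.mul_sum]
      exact Finset.sum_congr rfl fun i _ => by rw [pow_add, pow_one, mul_comm]
    rw [this, norm_mul, hnorm, one_mul, norm_div]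
    gcongr
    calc ‖z ^ n - 1‖ ≤ ‖z ^ n‖ + ‖(1:ℂ)‖ := norm_sub_le _ _
      _ = 2 := by rw [norm_pow, hnorm]; norm_num
  rw [tendsto_zero_iff_norm_tendsto_zero]
  apply squeeze_zero (fun n => norm_nonneg _) (g := fun n : ℕ => (2 / ‖z - 1‖) / n)
  · intro n
    rw [norm_mul, norm_inv, Complex.norm_natCast]
    calc (↑n:ℝ)⁻¹ * ‖∑ k ∈ Finset.Icc 1 n, fourier m (k • a)‖
        ≤ (↑n:ℝ)⁻¹ * (2 / ‖z - 1‖) := by gcongr; exact hbound n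
      _ = 2 / ‖z - 1‖ / ↑n := by ring
  · exact tendsto_const_div_atTop_nhds_zero_nat _


lemma key_span (a : AddCircle T)
    (ha : ∀ m : ℤ, m ≠ 0 → fourier m a ≠ 1)
    (f : C(AddCircle T, ℂ)) (hf : f ∈ Submodule.span ℂ (Set.range (fourier (T := T)))) :
    Tendsto (fun n : ℕ => (n:ℂ)⁻¹ * ∑ k ∈ Finset.Icc 1 n, f (k • a)) atTop
      (𝓝 (∫ x, f x ∂(haarAddCircle (T := T)))) := by
  induction hf using Submodule.span_induction with
  | mem f hf =>
    obtain ⟨m, rfl⟩ := hf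
    rcases eq_or_ne m 0 with rfl | hm
    · exact avg_fourier_zero a
    · exact avg_fourier_ne a hm (ha m hm)
  | zero => simpa using tendsto_const_nhds
  | add f g hfm hgm hf hg =>
    have := hf.add hg
    simp only [ContinuousMap.add_apply] at *
    rw [integral_add (integrable_cm f) (integrable_cm g)]
    convert this using 2 with n
    rw [Finset.sum_add_distrib, mul_add]
  | smul c f hfm hf =>
    have := hf.const_mul c
    simp only [ContinuousMap.smul_apply, smul_eq_mul] at *
    rw [integral_const_mul]
    convert this using 2 with n
    rw [Finset.mul_sum, Finset.mul_sum, Finset.mul_sum]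
    exact Finset.sum_congr rfl fun k _ => by ring

lemma key (a : AddCircle T)
    (ha : ∀ m : ℤ, m ≠ 0 → fourier m a ≠ 1)
    (f : C(AddCircle T, ℂ)) :
    Tendsto (fun n : ℕ => (n:ℂ)⁻¹ * ∑ k ∈ Finset.Icc 1 n, f (k • a)) atTop
      (𝓝 (∫ x, f x ∂(haarAddCircle (T := T)))) := by
  rw [Metric.tendsto_atTop]
  intro ε hε
  -- find P in the span with ‖f - P‖ < ε/4
  have hdense : f ∈ closure ((Submodule.span ℂ (Set.range (fourier (T := T)))) : Set C(AddCircle T, ℂ)) := by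
    have := span_fourier_closure_eq_top (T := T)
    have : f ∈ (Submodule.span ℂ (Set.range (fourier (T := T)))).topologicalClosure := by
      rw [this]; trivial
    exact this
  obtain ⟨P, hPmem, hPd⟩ := Metric.mem_closure_iff.mp hdense (ε/4) (by positivity)
  have hPd' : ‖f - P‖ < ε/4 := by rwa [← dist_eq_norm]
  obtain ⟨N, hN⟩ := Metric.tendsto_atTop.mp (key_span a ha P hPmem) (ε/4) (by positivity)
  refine ⟨max N 1, fun n hn => ?_⟩
  have hn1 : 1 ≤ n := le_trans (le_max_right _ _) hn
  have hnN : N ≤ n := le_trans (le_max_left _ _) hn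
  have hn0 : (0:ℝ) < n := by exact_mod_cast hn1
  -- bound 1 : difference of averages
  have b1 : dist ((n:ℂ)⁻¹ * ∑ k ∈ Finset.Icc 1 n, f (k • a))
      ((n:ℂ)⁻¹ * ∑ k ∈ Finset.Icc 1 n, P (k • a)) ≤ ‖f - P‖ := by
    rw [dist_eq_norm, ← mul_sub, ← Finset.sum_sub_distrib, norm_mul, norm_inv,
      Complex.norm_natCast]
    calc (↑n:ℝ)⁻¹ * ‖∑ k ∈ Finset.Icc 1 n, (f (k • a) - P (k • a))‖
        ≤ (↑n:ℝ)⁻¹ * ∑ k ∈ Finset.Icc 1 n, ‖f (k • a) - P (k • a)‖ := by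
          gcongr; exact norm_sum_le _ _
      _ ≤ (↑n:ℝ)⁻¹ * ∑ k ∈ Finset.Icc 1 n, ‖f - P‖ := by
          gcongr with k hk
          exact ((f - P).norm_coe_le_norm (k • a))
      _ = (↑n:ℝ)⁻¹ * (n * ‖f - P‖) := by
          rw [Finset.sum_const, Nat.card_Icc, add_tsub_cancel_right, nsmul_eq_mul]
      _ = ‖f - P‖ := by field_simp
  -- bound 3 : difference of integrals
  have b3 : dist (∫ x, P x ∂(haarAddCircle (T := T))) (∫ x, f x ∂(haarAddCircle (T := T)))
      ≤ ‖f - P‖ := by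
    rw [dist_eq_norm, ← integral_sub (integrable_cm P) (integrable_cm f)]
    calc ‖∫ x, (P x - f x) ∂(haarAddCircle (T := T))‖
        ≤ ‖f - P‖ * (haarAddCircle (T := T) Set.univ).toReal := by
          apply norm_integral_le_of_norm_le_const
          filter_upwards with x
          rw [← norm_neg, neg_sub]
          exact (f - P).norm_coe_le_norm x
      _ = ‖f - P‖ := by simp
  calc dist ((n:ℂ)⁻¹ * ∑ k ∈ Finset.Icc 1 n, f (k • a)) (∫ x, f x ∂(haarAddCircle (T := T)))
      ≤ dist ((n:ℂ)⁻¹ * ∑ k ∈ Finset.Icc 1 n, f (k • a))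
          ((n:ℂ)⁻¹ * ∑ k ∈ Finset.Icc 1 n, P (k • a))
        + dist ((n:ℂ)⁻¹ * ∑ k ∈ Finset.Icc 1 n, P (k • a))
            (∫ x, P x ∂(haarAddCircle (T := T)))
        + dist (∫ x, P x ∂(haarAddCircle (T := T))) (∫ x, f x ∂(haarAddCircle (T := T))) :=
        dist_triangle4 _ _ _ _
    _ < ε/4 + ε/4 + ε/4 := by
        gcongr
        · exact lt_of_le_of_lt b1 hPd'
        · exact hN n hnN
        · exact lt_of_le_of_lt b3 hPd'
    _ < ε := by linarith

end WeylAux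

end WeylAuxSection

open WeylAux MeasureTheory AddCircle Topology

open Real Filter in
theorem stmt_15 (α : ℝ) (hα : Irrational (α / (2 * π)))
    (g : ℝ → ℝ) (hg : ContinuousOn g (Set.Icc 0 (2 * π))) (hper : g 0 = g (2 * π)) :
    Tendsto
      (fun n : ℕ => (1 / (n:ℝ)) *
        ∑ k ∈ Finset.Icc 1 n, g (2 * π * Int.fract (k * α / (2 * π))))
      atTop (nhds ((1 / (2 * π)) * ∫ y in (0:ℝ)..(2 * π), g y)) := by
  have h2π : (0:ℝ) < 2 * π := by positivity
  haveI : Fact (0 < 2 * π) := ⟨h2π⟩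
  set f : C(AddCircle (2*π), ℂ) :=
    ⟨AddCircle.liftIco (2*π) 0 (fun y => (g y : ℂ)),
      AddCircle.liftIco_zero_continuous (congrArg (fun r : ℝ => (r:ℂ)) hper)
        (Complex.continuous_ofReal.comp_continuousOn hg)⟩ with hfdef
  -- nontriviality of characters at a = ↑α
  have ha : ∀ m : ℤ, m ≠ 0 → fourier m ((α : AddCircle (2*π))) ≠ 1 := by
    intro m hm hfeq
    rw [fourier_coe_apply, Complex.exp_eq_one_iff] at hfeq
    obtain ⟨n, hn⟩ := hfeq
    have hπ : (π:ℂ) ≠ 0 := Complex.ofReal_ne_zero.mpr pi_ne_zero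
    have h2 : (2*(π:ℂ)*Complex.I) * ((m:ℂ)*α) = (2*(π:ℂ)*Complex.I) * (n*(2*π)) := by
      push_cast at hn
      field_simp at hn
      linear_combination (2*(π:ℂ)*Complex.I) * hn
    have h3 : (m:ℂ)*α = n*(2*π) :=
      mul_left_cancel₀ (by simp [Complex.I_ne_zero, hπ] : (2*(π:ℂ)*Complex.I) ≠ 0) h2
    have h4 : (m:ℝ)*α = n*(2*π) := by exact_mod_cast h3
    have h5 : (m:ℝ) * (α/(2*π)) = n := by
      field_simp
      linarith [h4]
    exact (hα.intCast_mul hm).ne_int n h5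
  have hkey := key (T := 2*π) ((α : AddCircle (2*π))) ha f
  -- identify the points
  have hpt : ∀ k : ℕ, f ((k : ℕ) • ((α : AddCircle (2*π))))
      = ((g (2 * π * Int.fract (k * α / (2 * π))) : ℝ) : ℂ) := by
    intro k
    have h1 : ((k : ℕ) • ((α : AddCircle (2*π)))) = (((k:ℝ) * α : ℝ) : AddCircle (2*π)) := by
      rw [← AddCircle.coe_nsmul, nsmul_eq_mul]
    have h2 : ((k:ℝ) * α : ℝ) = 2 * π * Int.fract (k * α / (2 * π))
        + (⌊(k:ℝ) * α / (2 * π)⌋ : ℝ) * (2 * π) := by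
      rw [Int.fract]
      field_simp
      ring
    have h3 : ((((⌊(k:ℝ) * α / (2 * π)⌋ : ℝ) * (2 * π)) : ℝ) : AddCircle (2*π)) = 0 := by
      rw [AddCircle.coe_eq_zero_iff]
      exact ⟨⌊(k:ℝ) * α / (2 * π)⌋, by rw [zsmul_eq_mul]⟩
    have h4 : (((k:ℝ) * α : ℝ) : AddCircle (2*π))
        = ((2 * π * Int.fract ((k:ℝ) * α / (2 * π)) : ℝ) : AddCircle (2*π)) := by
      conv_lhs => rw [h2]
      rw [AddCircle.coe_add, h3, add_zero]
    have hmem : 2 * π * Int.fract ((k:ℝ) * α / (2 * π)) ∈ Set.Ico (0:ℝ) (2*π) := by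
      constructor
      · exact mul_nonneg h2π.le (Int.fract_nonneg _)
      · have := Int.fract_lt_one ((k:ℝ) * α / (2 * π))
        nlinarith [Int.fract_nonneg ((k:ℝ) * α / (2 * π))]
    rw [h1, h4]
    show AddCircle.liftIco (2*π) 0 (fun y => (g y : ℂ)) _ = _
    exact AddCircle.liftIco_zero_coe_apply hmem
  -- identify the integral
  have hint : ∫ x, f x ∂(haarAddCircle (T := 2*π))
      = (((1 / (2 * π)) * ∫ y in (0:ℝ)..(2 * π), g y : ℝ) : ℂ) := by
    have hv : ∫ x in (0:ℝ)..(0 + 2*π), f x = ∫ x : AddCircle (2*π), f x := by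
      exact AddCircle.intervalIntegral_preimage (2*π) 0 (fun x => f x)
    have hvol : ∫ x : AddCircle (2*π), f x
        = (2*π) * ∫ x, f x ∂(haarAddCircle (T := 2*π)) := by
      rw [volume_eq_smul_haarAddCircle, integral_smul_measure, ENNReal.toReal_ofReal h2π.le,
        real_smul, Complex.ofReal_mul]
      push_cast
      ring
    have heq : ∀ x ∈ Set.uIcc (0:ℝ) (0 + 2*π), f ((x : ℝ) : AddCircle (2*π)) = ((g x : ℝ) : ℂ) := by
      intro x hx
      rw [Set.uIcc_of_le (by linarith), zero_add] at hx
      rcases lt_or_eq_of_le hx.2 with h | h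
      · show AddCircle.liftIco (2*π) 0 (fun y => (g y : ℂ)) _ = _
        exact AddCircle.liftIco_zero_coe_apply ⟨hx.1, h⟩
      · subst h
        have hco : (((2*π : ℝ)) : AddCircle (2*π)) = ((0:ℝ) : AddCircle (2*π)) := by
          rw [show ((0:ℝ) : AddCircle (2*π)) = 0 by norm_cast]
          rw [AddCircle.coe_eq_zero_iff]
          exact ⟨1, by simp⟩
        show AddCircle.liftIco (2*π) 0 (fun y => (g y : ℂ)) _ = _
        rw [hco]
        have h0 := AddCircle.liftIco_zero_coe_apply (p := 2*π)
          (f := fun y => (g y : ℂ)) (x := 0) ⟨le_refl _, h2π⟩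
        rw [h0]
        exact congrArg (fun r : ℝ => (r:ℂ)) hper
    have hci : ∫ x in (0:ℝ)..(0 + 2*π), f ((x:ℝ) : AddCircle (2*π))
        = ∫ x in (0:ℝ)..(0 + 2*π), ((g x : ℝ) : ℂ) :=
      intervalIntegral.integral_congr heq
    -- combine
    have : (2*π) * ∫ x, f x ∂(haarAddCircle (T := 2*π)) = ∫ x in (0:ℝ)..(2*π), ((g x : ℝ) : ℂ) := by
      rw [← hvol, ← hv, hci]
      norm_num
    rw [intervalIntegral.integral_ofReal] at this
    have hπc : ((π : ℝ) : ℂ) ≠ 0 := Complex.ofReal_ne_zero.mpr pi_ne_zero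
    push_cast
    rw [← this]
    field_simp
  rw [hint] at hkey
  -- take real parts
  have hseq : ∀ n : ℕ, (((n:ℂ)⁻¹ * ∑ k ∈ Finset.Icc 1 n, f ((k:ℕ) • ((α : AddCircle (2*π))))).re)
      = (1 / (n:ℝ)) * ∑ k ∈ Finset.Icc 1 n, g (2 * π * Int.fract (k * α / (2 * π))) := by
    intro n
    rw [Finset.sum_congr rfl fun k _ => hpt k]
    rw [show ((n:ℂ))⁻¹ * ∑ k ∈ Finset.Icc 1 n, ((g (2 * π * Int.fract ((k:ℝ) * α / (2 * π))) : ℝ) : ℂ)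
        = (((1 / (n:ℝ)) * ∑ k ∈ Finset.Icc 1 n, g (2 * π * Int.fract ((k:ℝ) * α / (2 * π))) : ℝ) : ℂ) by
      push_cast; ring]
    rw [Complex.ofReal_re]
  have hlim := (Complex.continuous_re.tendsto _).comp hkey
  simp only [Function.comp, Complex.ofReal_re] at hlim
  exact Tendsto.congr hseq hlim
end
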